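/- Let a_1, ..., a_m be nonzero vectors in ℝⁿ and c_1, ..., c_m ≥ 0. Suppose there exists a finite D such that ∑_j c_j S(a_j · X) ≤ S(X) + D for every random vector X in ℝⁿ with finite entropy. Then ∑_{j=1}^m c_j = n. -/

import Mathlib

open MeasureTheory Real

open ProbabilityTheory
open scoped NNReal

set_option linter.unusedSectionVars false

lemma aux_rpow_two (t : ℝ) : t ^ (2:ℝ) = t^2 := by
  rw [show (2:ℝ) = ((2:ℕ):ℝ) by norm_num, Real.rpow_natCast]

lemma aux_integrable_sq_gauss {B : ℝ} (hB : 0 < B) :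
    Integrable (fun t : ℝ => t^2 * rexp (-B * t^2)) := by
  have h := integrable_rpow_mul_exp_neg_mul_sq hB (s := 2) (by norm_num)
  refine h.congr (Filter.Eventually.of_forall fun t => ?_)
  simp [aux_rpow_two]

lemma aux_integrable_gauss_log {A B : ℝ} (hA : 0 < A) (hB : 0 < B) :
    Integrable (fun t : ℝ => (A * rexp (-B * t^2)) * Real.log (A * rexp (-B * t^2))) := by
  have h1 : Integrable (fun t : ℝ => rexp (-B * t^2)) := integrable_exp_neg_mul_sq hB
  have heq : (fun t : ℝ => (A * rexp (-B * t^2)) * Real.log (A * rexp (-B * t^2)))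
      = fun t : ℝ => (A * Real.log A) * rexp (-B * t^2) + (-(A*B)) * (t^2 * rexp (-B * t^2)) := by
    funext t
    rw [Real.log_mul hA.ne' (Real.exp_ne_zero _), Real.log_exp]
    ring
  rw [heq]
  exact (h1.const_mul _).add ((aux_integrable_sq_gauss hB).const_mul _)

lemma aux_pdf_eq {v : ℝ≥0} (hv : v ≠ 0) :
    gaussianPDFReal 0 v = fun t : ℝ => (Real.sqrt (2 * π * v))⁻¹ * rexp (-(2 * (v:ℝ))⁻¹ * t^2) := by
  have hv' : (0:ℝ) < (v:ℝ) := by exact_mod_cast pos_iff_ne_zero.2 hv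
  funext t
  rw [gaussianPDFReal]
  congr 1
  rw [sub_zero]
  congr 1
  field_simp

lemma aux_integrable_pdf_mul_log {v : ℝ≥0} (hv : v ≠ 0) :
    Integrable (fun t => gaussianPDFReal 0 v t * Real.log (gaussianPDFReal 0 v t)) := by
  have hv' : (0:ℝ) < (v:ℝ) := by exact_mod_cast pos_iff_ne_zero.2 hv
  rw [aux_pdf_eq hv]
  exact aux_integrable_gauss_log (by positivity) (by positivity)
open scoped NNReal

noncomputable def fG (n : ℕ) : EuclideanSpace ℝ (Fin n) → ℝ :=
  fun x => ∏ i, gaussianPDFReal 0 1 (x i)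

lemma fG_pi_comp (n : ℕ) : fG n = (fun x : Fin n → ℝ => ∏ i, gaussianPDFReal 0 1 (x i)) ∘
    ((MeasurableEquiv.toLp 2 (Fin n → ℝ)).symm) := rfl

lemma fG_integrable (n : ℕ) : Integrable (fG n) := by
  rw [fG_pi_comp n,
    (EuclideanSpace.volume_preserving_symm_measurableEquiv_toLp (Fin n)).integrable_comp_emb
      (MeasurableEquiv.measurableEmbedding _)]
  exact Integrable.fintype_prod (fun i => integrable_gaussianPDFReal 0 1)

lemma fG_integral (n : ℕ) : ∫ x, fG n x = 1 := by
  rw [show (∫ x, fG n x) = ∫ x : Fin n → ℝ, ∏ i, gaussianPDFReal 0 1 (x i) from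
    (EuclideanSpace.volume_preserving_symm_measurableEquiv_toLp (Fin n)).integral_comp
      (MeasurableEquiv.measurableEmbedding _) (fun x : Fin n → ℝ => ∏ i, gaussianPDFReal 0 1 (x i)),
    integral_fintype_prod_volume_eq_prod]
  simp [integral_gaussianPDFReal_eq_one 0 one_ne_zero]


lemma aux_prod_ite {n : ℕ} (i : Fin n) (u w : ℝ → ℝ) (x : Fin n → ℝ) :
    (∏ k, (if k = i then u (x k) else w (x k))) =
      u (x i) * ∏ k ∈ Finset.univ.erase i, w (x k) := by
  rw [← Finset.mul_prod_erase Finset.univ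
      (fun k => if k = i then u (x k) else w (x k)) (Finset.mem_univ i), if_pos rfl]
  congr 1
  exact Finset.prod_congr rfl fun k hk => if_neg (Finset.ne_of_mem_erase hk)

lemma fG_entropy_integrable (n : ℕ) :
    Integrable (fun x => fG n x * Real.log (fG n x)) := by
  rw [show (fun x => fG n x * Real.log (fG n x))
      = (fun x : Fin n → ℝ => (∏ i, gaussianPDFReal 0 1 (x i)) *
          Real.log (∏ i, gaussianPDFReal 0 1 (x i))) ∘
        ((MeasurableEquiv.toLp 2 (Fin n → ℝ)).symm) from rfl,
    (EuclideanSpace.volume_preserving_symm_measurableEquiv_toLp (Fin n)).integrable_comp_emb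
      (MeasurableEquiv.measurableEmbedding _)]
  have hpos : ∀ t : ℝ, 0 < gaussianPDFReal 0 1 t := fun t =>
    gaussianPDFReal_pos 0 1 t one_ne_zero
  have key : (fun x : Fin n → ℝ => (∏ i, gaussianPDFReal 0 1 (x i)) *
      Real.log (∏ i, gaussianPDFReal 0 1 (x i)))
      = fun x => ∑ i, ∏ k, (if k = i then
          gaussianPDFReal 0 1 (x k) * Real.log (gaussianPDFReal 0 1 (x k))
        else gaussianPDFReal 0 1 (x k)) := by
    funext x
    rw [Real.log_prod (fun i _ => (hpos (x i)).ne'), Finset.mul_sum]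
    refine Finset.sum_congr rfl fun i _ => ?_
    rw [aux_prod_ite i (fun t => gaussianPDFReal 0 1 t * Real.log (gaussianPDFReal 0 1 t))
      (fun t => gaussianPDFReal 0 1 t) x,
      ← Finset.mul_prod_erase Finset.univ
        (fun k => gaussianPDFReal 0 1 (x k)) (Finset.mem_univ i)]
    ring
  rw [key]
  refine integrable_finset_sum _ fun i _ => ?_
  refine Integrable.fintype_prod (f := fun k t => if k = i then
      gaussianPDFReal 0 1 t * Real.log (gaussianPDFReal 0 1 t)
    else gaussianPDFReal 0 1 t) fun k => ?_
  by_cases h : k = i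
  · simpa [h] using aux_integrable_pdf_mul_log (v := 1) one_ne_zero
  · simpa [h] using integrable_gaussianPDFReal 0 1

lemma fG_meas (n : ℕ) : Measurable (fG n) := by
  refine Finset.measurable_prod _ fun i _ => ?_
  exact (measurable_gaussianPDFReal 0 1).comp
    ((measurable_pi_apply i).comp ((MeasurableEquiv.toLp 2 (Fin n → ℝ)).symm).measurable)

lemma fG_nonneg (n : ℕ) : ∀ x, 0 ≤ fG n x := fun x =>
  Finset.prod_nonneg fun i _ => gaussianPDFReal_nonneg 0 1 (x i)

set_option linter.unusedSectionVars false

lemma fG_norm_form (n : ℕ) (x : EuclideanSpace ℝ (Fin n)) :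
    fG n x = ((Real.sqrt (2*π))⁻¹)^n * rexp (-‖x‖^2/2) := by
  have hnorm : ‖x‖^2 = ∑ i, (x i)^2 := by
    rw [EuclideanSpace.norm_eq, Real.sq_sqrt (Finset.sum_nonneg fun i _ => sq_nonneg _)]
    simp [Real.norm_eq_abs, sq_abs]
  rw [fG, hnorm]
  simp only [gaussianPDFReal, NNReal.coe_one, mul_one, sub_zero]
  rw [Finset.prod_mul_distrib, Finset.prod_const, Finset.card_univ, Fintype.card_fin,
    ← Real.exp_sum]
  congr 1
  rw [neg_div, Finset.sum_div, ← Finset.sum_neg_distrib]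
  exact congrArg rexp (Finset.sum_congr rfl fun i _ => by ring)

lemma fG_marginal {n : ℕ} (hn : 0 < n) (a : EuclideanSpace ℝ (Fin n)) (hA : a ≠ 0)
    (φ : ℝ → ℝ) :
    ∫ x, φ ((inner ℝ a x : ℝ)) * fG n x
      = ∫ t, φ t * gaussianPDFReal 0 ⟨‖a‖^2, sq_nonneg _⟩ t := by
  set r : ℝ := ‖a‖ with hr_def
  have hr : 0 < r := norm_pos_iff.2 hA
  set u : EuclideanSpace ℝ (Fin n) := r⁻¹ • a with hu_def
  have hu : ‖u‖ = 1 := by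
    rw [hu_def, norm_smul, norm_inv, Real.norm_eq_abs, abs_of_pos hr, ← hr_def,
      inv_mul_cancel₀ hr.ne']
  set i0 : Fin n := ⟨0, hn⟩ with hi0_def
  -- orthonormal basis with B i0 = u
  have hortho : Orthonormal ℝ (Set.restrict {i0} (fun _ : Fin n => u)) := by
    constructor
    · intro i; exact hu
    · intro i j hij
      exact absurd (Subtype.ext ((Set.mem_singleton_iff.1 i.2).trans
        (Set.mem_singleton_iff.1 j.2).symm)) hij
  obtain ⟨B, hB⟩ := hortho.exists_orthonormalBasis_extension_of_card_eq
    (by simp [finrank_euclideanSpace_fin])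
  have hBi0 : B i0 = u := hB i0 rfl
  set L := B.repr.symm with hL_def
  -- rotate
  have step1 : ∫ x, φ ((inner ℝ a x : ℝ)) * fG n x
      = ∫ y : EuclideanSpace ℝ (Fin n), φ ((inner ℝ a (L y) : ℝ)) * fG n (L y) :=
    (L.measurePreserving.integral_comp L.toHomeomorph.measurableEmbedding _).symm
  have hinner : ∀ y : EuclideanSpace ℝ (Fin n), (inner ℝ a (L y) : ℝ) = r * y i0 := by
    intro y
    have ha_eq : a = r • u := by rw [hu_def, smul_inv_smul₀ hr.ne']
    rw [ha_eq, real_inner_smul_left, ← hBi0, ← OrthonormalBasis.repr_apply_apply,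
      hL_def, LinearIsometryEquiv.apply_symm_apply]
  have step2 : ∫ y : EuclideanSpace ℝ (Fin n), φ ((inner ℝ a (L y) : ℝ)) * fG n (L y)
      = ∫ y : EuclideanSpace ℝ (Fin n), φ (r * y i0) * fG n y := by
    refine integral_congr_ae (Filter.Eventually.of_forall fun y => ?_)
    dsimp only
    rw [hinner y, fG_norm_form, fG_norm_form, LinearIsometryEquiv.norm_map]
  -- transfer to pi and Fubini
  have step3 : ∫ y : EuclideanSpace ℝ (Fin n), φ (r * y i0) * fG n y
      = ∫ y : Fin n → ℝ, ∏ k, (if k = i0 then φ (r * y k) * gaussianPDFReal 0 1 (y k)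
          else gaussianPDFReal 0 1 (y k)) := by
    rw [show (∫ y : EuclideanSpace ℝ (Fin n), φ (r * y i0) * fG n y)
        = ∫ y : Fin n → ℝ, φ (r * y i0) * ∏ i, gaussianPDFReal 0 1 (y i) from
      (EuclideanSpace.volume_preserving_symm_measurableEquiv_toLp (Fin n)).integral_comp
        (MeasurableEquiv.measurableEmbedding _)
        (fun y : Fin n → ℝ => φ (r * y i0) * ∏ i, gaussianPDFReal 0 1 (y i))]
    refine integral_congr_ae (Filter.Eventually.of_forall fun y => ?_)
    dsimp only
    rw [aux_prod_ite i0 (fun t => φ (r * t) * gaussianPDFReal 0 1 t)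
        (fun t => gaussianPDFReal 0 1 t) y,
      ← Finset.mul_prod_erase Finset.univ
        (fun k => gaussianPDFReal 0 1 (y k)) (Finset.mem_univ i0)]
    ring
  have step4 : ∫ y : Fin n → ℝ, ∏ k, (if k = i0 then φ (r * y k) * gaussianPDFReal 0 1 (y k)
          else gaussianPDFReal 0 1 (y k))
      = ∫ t, φ (r * t) * gaussianPDFReal 0 1 t := by
    rw [integral_fintype_prod_volume_eq_prod (f := fun k t =>
      if k = i0 then φ (r * t) * gaussianPDFReal 0 1 t else gaussianPDFReal 0 1 t)]
    rw [Finset.prod_eq_single_of_mem i0 (Finset.mem_univ _) (fun k _ hk => by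
      simp only [if_neg hk]
      exact integral_gaussianPDFReal_eq_one 0 one_ne_zero)]
    simp only [eq_self_iff_true, if_true]
  -- 1-D change of variables
  have hpdf : ∀ t : ℝ, gaussianPDFReal 0 1 t
      = r * gaussianPDFReal 0 ⟨‖a‖^2, sq_nonneg _⟩ (r * t) := by
    intro t
    have := gaussianPDFReal_inv_mul (μ := 0) (v := 1) (c := r) hr.ne' (r * t)
    rw [inv_mul_cancel_left₀ hr.ne'] at this
    have hveq : ((⟨r^2, sq_nonneg r⟩ : ℝ≥0) * 1) = (⟨‖a‖^2, sq_nonneg _⟩ : ℝ≥0) :=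
      mul_one _
    rw [this, mul_zero, abs_of_pos hr]
    exact congrArg (fun v => r * gaussianPDFReal 0 v (r * t)) hveq
  have step5 : ∫ t, φ (r * t) * gaussianPDFReal 0 1 t
      = ∫ t, φ t * gaussianPDFReal 0 ⟨‖a‖^2, sq_nonneg _⟩ t := by
    have : ∀ t : ℝ, φ (r * t) * gaussianPDFReal 0 1 t
        = (fun s => r * (φ s * gaussianPDFReal 0 ⟨‖a‖^2, sq_nonneg _⟩ s)) (r * t) := by
      intro t; rw [hpdf t]; ring
    rw [integral_congr_ae (Filter.Eventually.of_forall this),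
      Measure.integral_comp_mul_left
        (fun s => r * (φ s * gaussianPDFReal 0 ⟨‖a‖^2, sq_nonneg _⟩ s)) r,
      integral_const_mul, abs_of_pos (inv_pos.2 hr), smul_eq_mul, ← mul_assoc,
      inv_mul_cancel₀ hr.ne', one_mul]
  rw [step1, step2, step3, step4, step5]

lemma aux_scale_pt {c t : ℝ} (hc : 0 < c) (ht : 0 ≤ t) :
    (c * t) * Real.log (c * t) = c * (t * Real.log t) + (c * Real.log c) * t := by
  rcases eq_or_lt_of_le ht with h | h
  · simp [← h]
  · rw [Real.log_mul hc.ne' h.ne']; ring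

section Scale

variable {E : Type*} [NormedAddCommGroup E] [NormedSpace ℝ E] [MeasurableSpace E]
  [BorelSpace E] [FiniteDimensional ℝ E] (μ : Measure E) [μ.IsAddHaarMeasure]

lemma aux_comp_smul_integral (f : E → ℝ) {l : ℝ} (hl : 0 < l) :
    ∫ x, f (l⁻¹ • x) ∂μ = l ^ (Module.finrank ℝ E) * ∫ x, f x ∂μ := by
  rw [Measure.integral_comp_smul μ f l⁻¹, inv_pow, inv_inv,
    abs_of_pos (by positivity), smul_eq_mul]

lemma aux_scaled_fun_eq (f : E → ℝ) (hf0 : ∀ x, 0 ≤ f x) {l : ℝ} (hl : 0 < l) (k : ℕ) :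
    (fun x => (l⁻¹ ^ k * f (l⁻¹ • x)) * Real.log (l⁻¹ ^ k * f (l⁻¹ • x)))
      = fun x => (fun y => l⁻¹ ^ k * (f y * Real.log (f y))
          + (l⁻¹ ^ k * Real.log (l⁻¹ ^ k)) * f y) (l⁻¹ • x) := by
  funext x
  exact aux_scale_pt (by positivity) (hf0 _)

lemma aux_scaled_entropy_integrable {f : E → ℝ} (hf0 : ∀ x, 0 ≤ f x)
    (hfi : Integrable f μ) (hfe : Integrable (fun x => f x * Real.log (f x)) μ)
    {l : ℝ} (hl : 0 < l) (k : ℕ) :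
    Integrable (fun x => (l⁻¹ ^ k * f (l⁻¹ • x)) *
      Real.log (l⁻¹ ^ k * f (l⁻¹ • x))) μ := by
  rw [aux_scaled_fun_eq f hf0 hl k]
  exact ((hfe.const_mul _).add (hfi.const_mul _)).comp_smul (inv_ne_zero hl.ne')

lemma aux_scaled_entropy_value {f : E → ℝ} (hf0 : ∀ x, 0 ≤ f x)
    (hfi : Integrable f μ) (hfe : Integrable (fun x => f x * Real.log (f x)) μ)
    {l : ℝ} (hl : 0 < l) :
    ∫ x, (l⁻¹ ^ (Module.finrank ℝ E) * f (l⁻¹ • x)) *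
        Real.log (l⁻¹ ^ (Module.finrank ℝ E) * f (l⁻¹ • x)) ∂μ
      = (∫ x, f x * Real.log (f x) ∂μ)
        + Real.log (l⁻¹ ^ (Module.finrank ℝ E)) * ∫ x, f x ∂μ := by
  set k := Module.finrank ℝ E with hk
  have hlk : l ^ k * l⁻¹ ^ k = 1 := by
    rw [inv_pow, mul_inv_cancel₀ (pow_ne_zero _ hl.ne')]
  rw [aux_scaled_fun_eq f hf0 hl k,
    aux_comp_smul_integral μ (fun y => l⁻¹ ^ k * (f y * Real.log (f y))
      + (l⁻¹ ^ k * Real.log (l⁻¹ ^ k)) * f y) hl,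
    integral_add (hfe.const_mul _) (hfi.const_mul _),
    integral_const_mul, integral_const_mul]
  linear_combination ((∫ x, f x * Real.log (f x) ∂μ)
    + Real.log (l⁻¹ ^ k) * ∫ x, f x ∂μ) * hlk

end Scale

/-- Necessary condition for subadditivity of entropy: if for some finite `D`,
`∑ j, c j * S(a j · X) ≤ S(X) + D` holds for every random vector `X` in `ℝⁿ`
with finite entropy (and with marginal densities `fa j` of finite entropy),
then `∑ j, c j = n`. -/
theorem subadditivity_forces_sum_eq_dim {n m : ℕ}
    (a : Fin m → EuclideanSpace ℝ (Fin n)) (ha : ∀ j, a j ≠ 0)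
    (c : Fin m → ℝ) (hc : ∀ j, 0 ≤ c j) (D : ℝ)
    (H : ∀ (f : EuclideanSpace ℝ (Fin n) → ℝ) (fa : Fin m → ℝ → ℝ),
      Measurable f → (∀ x, 0 ≤ f x) → Integrable f → (∫ x, f x) = 1 →
      Integrable (fun x => f x * Real.log (f x)) →
      (∀ j, Measurable (fa j)) → (∀ j t, 0 ≤ fa j t) →
      (∀ j, Integrable (fun t => fa j t * Real.log (fa j t))) →
      (∀ j (φ : ℝ → ℝ), Continuous φ → (∃ C, ∀ t, |φ t| ≤ C) →
        ∫ x, φ ((inner ℝ (a j) x : ℝ)) * f x = ∫ t, φ t * fa j t) →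
      ∑ j, c j * ∫ t, fa j t * Real.log (fa j t) ≤
        (∫ x, f x * Real.log (f x)) + D) :
    ∑ j, c j = n := by
  rcases Nat.eq_zero_or_pos n with hn0 | hn
  · subst hn0
    rcases Nat.eq_zero_or_pos m with hm0 | hm
    · subst hm0; simp
    · haveI : Subsingleton (EuclideanSpace ℝ (Fin 0)) :=
        ⟨fun x y => PiLp.ext fun i => i.elim0⟩
      exact absurd (Subsingleton.elim (a ⟨0, hm⟩) 0) (ha ⟨0, hm⟩)
  have hfr : Module.finrank ℝ (EuclideanSpace ℝ (Fin n)) = n := finrank_euclideanSpace_fin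
  have hvj : ∀ j, ((⟨‖a j‖^2, sq_nonneg _⟩ : ℝ≥0)) ≠ 0 := fun j =>
    NNReal.coe_ne_zero.1 (by
      change ‖a j‖^2 ≠ 0; exact pow_ne_zero 2 (norm_ne_zero_iff.2 (ha j)))
  set fa : Fin m → ℝ → ℝ := fun j => gaussianPDFReal 0 ⟨‖a j‖^2, sq_nonneg _⟩ with hfa_def
  have hfa_int : ∀ j, Integrable (fa j) := fun j => integrable_gaussianPDFReal _ _
  have hfa_ent : ∀ j, Integrable (fun t => fa j t * Real.log (fa j t)) := fun j =>
    aux_integrable_pdf_mul_log (hvj j)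
  have hfa_one : ∀ j, (∫ t, fa j t) = 1 := fun j =>
    integral_gaussianPDFReal_eq_one 0 (hvj j)
  set Sf : ℝ := ∫ x, fG n x * Real.log (fG n x) with hSf
  set Sa : Fin m → ℝ := fun j => ∫ t, fa j t * Real.log (fa j t) with hSa
  set K : ℝ := Sf + D - ∑ j, c j * Sa j with hK
  have key : ∀ L : ℝ, ((n : ℝ) - ∑ j, c j) * L ≤ K := by
    intro L
    set l : ℝ := Real.exp L with hl_def
    have hl : 0 < l := Real.exp_pos L
    have hlog : Real.log l = L := Real.log_exp L
    have hln : l ^ n * l⁻¹ ^ n = 1 := by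
      rw [inv_pow, mul_inv_cancel₀ (pow_ne_zero _ hl.ne')]
    have hMain := H (fun x => l⁻¹ ^ n * fG n (l⁻¹ • x)) (fun j t => l⁻¹ * fa j (l⁻¹ * t))
      (((fG_meas n).comp (measurable_const_smul l⁻¹)).const_mul _)
      (fun x => mul_nonneg (by positivity) (fG_nonneg n _))
      (((fG_integrable n).comp_smul (inv_ne_zero hl.ne')).const_mul _)
      (by
        rw [integral_const_mul, aux_comp_smul_integral volume (fG n) hl, hfr, fG_integral n,
          mul_one, inv_pow]
        exact inv_mul_cancel₀ (pow_ne_zero _ hl.ne'))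
      (by
        have h := aux_scaled_entropy_integrable (volume : Measure (EuclideanSpace ℝ (Fin n)))
          (fG_nonneg n) (fG_integrable n) (fG_entropy_integrable n) hl n
        exact h)
      (fun j => ((measurable_gaussianPDFReal _ _).comp (measurable_const_mul _)).const_mul _)
      (fun j t => mul_nonneg (by positivity) (gaussianPDFReal_nonneg _ _ _))
      (fun j => by
        have h := aux_scaled_entropy_integrable (volume : Measure ℝ)
          (fun t => gaussianPDFReal_nonneg 0 ⟨‖a j‖^2, sq_nonneg _⟩ t)
          (hfa_int j) (hfa_ent j) hl 1
        simpa only [pow_one, smul_eq_mul] using h)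
      (fun j φ hφc hφb => by
        have hstep1 : (fun x : EuclideanSpace ℝ (Fin n) =>
            φ ((inner ℝ (a j) x : ℝ)) * (l⁻¹ ^ n * fG n (l⁻¹ • x)))
            = fun x => (fun y => l⁻¹ ^ n * (φ (l * (inner ℝ (a j) y : ℝ)) * fG n y))
                (l⁻¹ • x) := by
          funext x
          dsimp only
          rw [real_inner_smul_right, mul_inv_cancel_left₀ hl.ne']
          ring
        rw [hstep1, aux_comp_smul_integral volume
          (fun y => l⁻¹ ^ n * (φ (l * (inner ℝ (a j) y : ℝ)) * fG n y)) hl, hfr,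
          integral_const_mul]
        have hmarg_base := fG_marginal hn (a j) (ha j) (fun t => φ (l * t))
        rw [hmarg_base]
        have hstep2 : ∫ t, φ t * (l⁻¹ * fa j (l⁻¹ * t))
            = ∫ t, φ (l * t) * fa j t := by
          have hpt : (fun s : ℝ => φ s * (l⁻¹ * fa j (l⁻¹ * s)))
              = fun s => (fun t => l⁻¹ * (φ (l * t) * fa j t)) (l⁻¹ * s) := by
            funext s
            dsimp only
            rw [mul_inv_cancel_left₀ hl.ne']
            ring
          rw [hpt, Measure.integral_comp_inv_mul_left
            (fun t => l⁻¹ * (φ (l * t) * fa j t)) l, integral_const_mul,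
            abs_of_pos hl, smul_eq_mul, ← mul_assoc, mul_inv_cancel₀ hl.ne', one_mul]
        rw [hstep2, ← mul_assoc, hln, one_mul])
    -- now rewrite the entropy integrals in hMain
    have hval_f : (∫ x, (l⁻¹ ^ n * fG n (l⁻¹ • x)) *
        Real.log (l⁻¹ ^ n * fG n (l⁻¹ • x))) = Sf - n * L := by
      have e := aux_scaled_entropy_value (volume : Measure (EuclideanSpace ℝ (Fin n)))
        (fG_nonneg n) (fG_integrable n) (fG_entropy_integrable n) hl
      rw [hfr, fG_integral n, mul_one] at e
      rw [e, Real.log_pow, Real.log_inv, hlog, ← hSf]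
      ring
    have hval_j : ∀ j, (∫ t, (l⁻¹ * fa j (l⁻¹ * t)) *
        Real.log (l⁻¹ * fa j (l⁻¹ * t))) = Sa j - L := by
      intro j
      have e := aux_scaled_entropy_value (volume : Measure ℝ)
        (fun t => gaussianPDFReal_nonneg 0 ⟨‖a j‖^2, sq_nonneg _⟩ t)
        (hfa_int j) (hfa_ent j) hl
      simp only [Module.finrank_self, pow_one, smul_eq_mul] at e
      rw [e, hfa_one j, mul_one, Real.log_inv, hlog]
      simp only [hSa, hfa_def]
      ring
    rw [hval_f] at hMain
    have hsum : (∑ j, c j * ∫ t, (l⁻¹ * fa j (l⁻¹ * t)) *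
        Real.log (l⁻¹ * fa j (l⁻¹ * t))) = ∑ j, c j * (Sa j - L) := by
      exact Finset.sum_congr rfl fun j _ => by rw [hval_j j]
    rw [hsum] at hMain
    have hexpand : (∑ j, c j * (Sa j - L))
        = (∑ j, c j * Sa j) - (∑ j, c j) * L := by
      rw [Finset.sum_mul, ← Finset.sum_sub_distrib]
      exact Finset.sum_congr rfl fun j _ => by ring
    rw [hexpand] at hMain
    rw [hK]
    linarith
  have hzero : (n : ℝ) - ∑ j, c j = 0 := by
    by_contra hs
    have h1 := key ((K + 1) / ((n : ℝ) - ∑ j, c j))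
    rw [mul_div_cancel₀ _ hs] at h1
    linarith
  linarith
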